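/- A finitely generated projective Hopf algebra H over a commutative ring k is an FH-algebra if and only if its dual Hopf algebra H* (with convolution product (f g)(x) = ∑ f(x_1) g(x_2), comultiplication dual to the multiplication of H, unit ε, counit f ↦ f(1), and antipode the dual of S) is an FH-algebra. -/

import Mathlib

open TensorProduct

/-- `(φ, x, y)` is a Frobenius system for the `k`-algebra `A`. -/
def IsFrobeniusSystem (k : Type*) [CommRing k] (A : Type*) [Ring A] [Algebra k A]
    (φ : A →ₗ[k] k) {n : ℕ} (x y : Fin n → A) : Prop :=
  ∀ a : A, (∑ i, φ (y i * a) • x i = a) ∧ (∑ i, φ (a * x i) • y i = a)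

/-- The convolution product on the dual `H* = Hom_k(H, k)` of a coalgebra:
`(conv f g) a = ∑ f(a₁) g(a₂)`. -/
noncomputable def conv (k : Type*) [CommRing k] (H : Type*) [AddCommGroup H] [Module k H]
    [Coalgebra k H] (f g : H →ₗ[k] k) : H →ₗ[k] k :=
  (LinearMap.mul' k k) ∘ₗ (TensorProduct.map f g) ∘ₗ (Coalgebra.comul (R := k))

namespace FHproof

open Coalgebra HopfAlgebra LinearMap

variable {k : Type*} [CommRing k] {H : Type*} [Ring H] [HopfAlgebra k H]


open Coalgebra HopfAlgebra LinearMap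

variable {k : Type*} [CommRing k] {H : Type*} [Ring H] [HopfAlgebra k H]

/-- `lap f (x ⊗ y) = f x • y`. -/
noncomputable def lap (f : H →ₗ[k] k) : H ⊗[k] H →ₗ[k] H :=
  (TensorProduct.lid k H).toLinearMap ∘ₗ TensorProduct.map f LinearMap.id

/-- `rap f (x ⊗ y) = f y • x`. -/
noncomputable def rap (f : H →ₗ[k] k) : H ⊗[k] H →ₗ[k] H :=
  (TensorProduct.rid k H).toLinearMap ∘ₗ TensorProduct.map LinearMap.id f

@[simp] lemma lap_tmul (f : H →ₗ[k] k) (x y : H) : lap f (x ⊗ₜ[k] y) = f x • y := by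
  simp [lap]

@[simp] lemma rap_tmul (f : H →ₗ[k] k) (x y : H) : rap f (x ⊗ₜ[k] y) = f y • x := by
  simp [rap]

lemma lap_addf (f g : H →ₗ[k] k) (w : H ⊗[k] H) : lap (f + g) w = lap f w + lap g w := by
  induction w using TensorProduct.induction_on with
  | zero => simp
  | tmul x y => simp [add_smul]
  | add u v hu hv => simp_all [map_add]; abel

lemma lap_smulf (c : k) (f : H →ₗ[k] k) (w : H ⊗[k] H) : lap (c • f) w = c • lap f w := by
  induction w using TensorProduct.induction_on with
  | zero => simp
  | tmul x y => simp [smul_smul]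
  | add u v hu hv => simp_all [map_add, smul_add]

lemma lap_zerof (w : H ⊗[k] H) : lap (0 : H →ₗ[k] k) w = 0 := by
  induction w using TensorProduct.induction_on with
  | zero => simp
  | tmul x y => simp
  | add u v hu hv => simp_all [map_add]

lemma rap_addf (f g : H →ₗ[k] k) (w : H ⊗[k] H) : rap (f + g) w = rap f w + rap g w := by
  induction w using TensorProduct.induction_on with
  | zero => simp
  | tmul x y => simp [add_smul]
  | add u v hu hv => simp_all [map_add]; abel

lemma rap_smulf (c : k) (f : H →ₗ[k] k) (w : H ⊗[k] H) : rap (c • f) w = c • rap f w := by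
  induction w using TensorProduct.induction_on with
  | zero => simp
  | tmul x y => simp [smul_smul]
  | add u v hu hv => simp_all [map_add, smul_add]

lemma rap_zerof (w : H ⊗[k] H) : rap (0 : H →ₗ[k] k) w = 0 := by
  induction w using TensorProduct.induction_on with
  | zero => simp
  | tmul x y => simp
  | add u v hu hv => simp_all [map_add]

lemma lap_sumf {n : ℕ} (c : Fin n → k) (G : Fin n → (H →ₗ[k] k)) (w : H ⊗[k] H) :
    lap (∑ j, c j • G j) w = ∑ j, c j • lap (G j) w := by
  classical
  induction (Finset.univ : Finset (Fin n)) using Finset.induction_on with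
  | empty => simpa using lap_zerof w
  | insert hx ih => simp_all [Finset.sum_insert, lap_addf, lap_smulf]

lemma rap_sumf {n : ℕ} (c : Fin n → k) (G : Fin n → (H →ₗ[k] k)) (w : H ⊗[k] H) :
    rap (∑ j, c j • G j) w = ∑ j, c j • rap (G j) w := by
  classical
  induction (Finset.univ : Finset (Fin n)) using Finset.induction_on with
  | empty => simpa using rap_zerof w
  | insert hx ih => simp_all [Finset.sum_insert, rap_addf, rap_smulf]

lemma mul'_map_lap (f g : H →ₗ[k] k) (w : H ⊗[k] H) :
    LinearMap.mul' k k (TensorProduct.map f g w) = g (lap f w) := by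
  induction w using TensorProduct.induction_on with
  | zero => simp
  | tmul x y => simp [smul_eq_mul, mul_comm]
  | add u v hu hv => simp_all [map_add]

lemma mul'_map_rap (f g : H →ₗ[k] k) (w : H ⊗[k] H) :
    LinearMap.mul' k k (TensorProduct.map f g w) = f (rap g w) := by
  induction w using TensorProduct.induction_on with
  | zero => simp
  | tmul x y => simp [smul_eq_mul, mul_comm]
  | add u v hu hv => simp_all [map_add]

lemma lap_lTensor (f : H →ₗ[k] k) (φ : H →ₗ[k] H) (w : H ⊗[k] H) :
    lap f ((LinearMap.lTensor H φ) w) = φ (lap f w) := by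
  induction w using TensorProduct.induction_on with
  | zero => simp
  | tmul x y => simp
  | add u v hu hv => simp_all [map_add]

lemma rap_rTensor (f : H →ₗ[k] k) (φ : H →ₗ[k] H) (w : H ⊗[k] H) :
    rap f ((LinearMap.rTensor H φ) w) = φ (rap f w) := by
  induction w using TensorProduct.induction_on with
  | zero => simp
  | tmul x y => simp
  | add u v hu hv => simp_all [map_add]

lemma eps_lap (f : H →ₗ[k] k) (w : H ⊗[k] H) :
    Coalgebra.counit (R := k) (lap f w) = f (rap (Coalgebra.counit (R := k)) w) := by
  induction w using TensorProduct.induction_on with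
  | zero => simp
  | tmul x y => simp [smul_eq_mul, mul_comm]
  | add u v hu hv => simp_all [map_add]

lemma eps_rap (f : H →ₗ[k] k) (w : H ⊗[k] H) :
    Coalgebra.counit (R := k) (rap f w) = f (lap (Coalgebra.counit (R := k)) w) := by
  induction w using TensorProduct.induction_on with
  | zero => simp
  | tmul x y => simp [smul_eq_mul, mul_comm]
  | add u v hu hv => simp_all [map_add]

lemma lap_counit (a : H) :
    lap (Coalgebra.counit (R := k)) (Coalgebra.comul (R := k) a) = a := by
  have h := Coalgebra.rTensor_counit_comul (R := k) (A := H) a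
  have : lap (Coalgebra.counit (R := k)) (Coalgebra.comul (R := k) a)
      = (TensorProduct.lid k H) ((Coalgebra.counit (R := k)).rTensor H
          (Coalgebra.comul (R := k) a)) := rfl
  rw [this, h]
  simp

lemma rap_counit (a : H) :
    rap (Coalgebra.counit (R := k)) (Coalgebra.comul (R := k) a) = a := by
  have h := Coalgebra.lTensor_counit_comul (R := k) (A := H) a
  have : rap (Coalgebra.counit (R := k)) (Coalgebra.comul (R := k) a)
      = (TensorProduct.rid k H) ((Coalgebra.counit (R := k)).lTensor H
          (Coalgebra.comul (R := k) a)) := rfl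
  rw [this, h]
  simp

lemma mulS_l (a : H) :
    LinearMap.mul' k H ((LinearMap.lTensor H (HopfAlgebra.antipode k : H →ₗ[k] H))
      (Coalgebra.comul (R := k) a)) = Coalgebra.counit (R := k) a • (1 : H) := by
  rw [HopfAlgebra.mul_antipode_lTensor_comul_apply, Algebra.algebraMap_eq_smul_one]

lemma mulS_r (a : H) :
    LinearMap.mul' k H ((LinearMap.rTensor H (HopfAlgebra.antipode k : H →ₗ[k] H))
      (Coalgebra.comul (R := k) a)) = Coalgebra.counit (R := k) a • (1 : H) := by
  rw [HopfAlgebra.mul_antipode_rTensor_comul_apply, Algebra.algebraMap_eq_smul_one]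




/-- The fundamental identity for a right integral `lam` in the dual:
`∑ lam (c₁ * a) • c₂ = ∑ lam (c * a₁) • S a₂`. -/
theorem star_id (lam : H →ₗ[k] k)
    (hri : ∀ a : H, lap lam (Coalgebra.comul (R := k) a) = lam a • (1 : H)) (a c : H) :
    lap (lam ∘ₗ LinearMap.mulRight k a) (Coalgebra.comul (R := k) c)
      = lap (lam ∘ₗ LinearMap.mulLeft k c)
          ((LinearMap.lTensor H (HopfAlgebra.antipode k : H →ₗ[k] H))
            (Coalgebra.comul (R := k) a)) := by
  set S : H →ₗ[k] H := (HopfAlgebra.antipode k : H →ₗ[k] H) with hS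
  set D : H ⊗[k] H := Coalgebra.comul (R := k) c with hD
  set A1 : H ⊗[k] H →ₗ[k] H := lap lam ∘ₗ LinearMap.mulLeft k D with hA1
  set Θ : (H ⊗[k] H) ⊗[k] H →ₗ[k] H := LinearMap.mul' k H ∘ₗ TensorProduct.map A1 S with hΘ
  set Θ' : H ⊗[k] (H ⊗[k] H) →ₗ[k] H :=
    Θ ∘ₗ (TensorProduct.assoc k H H H).symm.toLinearMap with hΘ'
  have hA1app : ∀ w : H ⊗[k] H, A1 w = lap lam (D * w) := fun w => rfl
  have hΘapp : ∀ (u : H ⊗[k] H) (z : H), Θ (u ⊗ₜ[k] z) = A1 u * S z := by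
    intro u z; simp [hΘ]
  have hΘ'app : ∀ (x : H) (v : H ⊗[k] H),
      Θ' (x ⊗ₜ[k] v) = Θ ((TensorProduct.assoc k H H H).symm (x ⊗ₜ[k] v)) := fun x v => rfl
  -- Step A : `lap (lam ∘ mulRight a) w = lap lam (w * (a ⊗ 1))`
  have stepA : ∀ w : H ⊗[k] H,
      lap (lam ∘ₗ LinearMap.mulRight k a) w = lap lam (w * (a ⊗ₜ[k] (1 : H))) := by
    intro w
    induction w using TensorProduct.induction_on with
    | zero => simp
    | tmul x y => simp [Algebra.TensorProduct.tmul_mul_tmul]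
    | add u v hu hv => simp_all [map_add, add_mul]
  -- sub-claim: multiplying the second leg
  have c2a : ∀ (x r s : H),
      lap lam (D * (x ⊗ₜ[k] r)) * s = lap lam (D * (x ⊗ₜ[k] (r * s))) := by
    intro x r s
    have : ∀ w : H ⊗[k] H,
        lap lam (w * (x ⊗ₜ[k] r)) * s = lap lam (w * (x ⊗ₜ[k] (r * s))) := by
      intro w
      induction w using TensorProduct.induction_on with
      | zero => simp
      | tmul p q =>
        simp [Algebra.TensorProduct.tmul_mul_tmul, smul_mul_assoc, mul_assoc]
      | add u v hu hv => simp_all [map_add, add_mul]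
    exact this D
  -- C1
  have c1 : ∀ u : H ⊗[k] H,
      Θ ((LinearMap.rTensor H (Coalgebra.comul (R := k) (A := H))) u)
        = lap (lam ∘ₗ LinearMap.mulLeft k c) ((LinearMap.lTensor H S) u) := by
    intro u
    induction u using TensorProduct.induction_on with
    | zero => simp
    | tmul x z =>
      rw [LinearMap.rTensor_tmul, hΘapp, hA1app]
      have hcm : D * Coalgebra.comul (R := k) x = Coalgebra.comul (R := k) (c * x) := by
        rw [hD, ← Bialgebra.comul_mul]
      rw [hcm, hri, LinearMap.lTensor_tmul]
      simp [smul_mul_assoc]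
    | add u v hu hv => simp_all [map_add]
  -- C2
  have c2 : ∀ u : H ⊗[k] H,
      Θ' ((LinearMap.lTensor H (Coalgebra.comul (R := k) (A := H))) u)
        = lap lam (D * ((rap (Coalgebra.counit (R := k)) u) ⊗ₜ[k] (1 : H))) := by
    intro u
    induction u using TensorProduct.induction_on with
    | zero => simp
    | tmul x y =>
      rw [LinearMap.lTensor_tmul]
      have inner : ∀ v : H ⊗[k] H,
          Θ' (x ⊗ₜ[k] v)
            = lap lam (D * (x ⊗ₜ[k] (LinearMap.mul' k H ((LinearMap.lTensor H S) v)))) := by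
        intro v
        induction v using TensorProduct.induction_on with
        | zero => simp
        | tmul r s =>
          rw [hΘ'app, TensorProduct.assoc_symm_tmul, hΘapp, hA1app, c2a,
            LinearMap.lTensor_tmul, LinearMap.mul'_apply]
        | add v₁ v₂ h₁ h₂ =>
          rw [TensorProduct.tmul_add, map_add, h₁, h₂, map_add, map_add,
            TensorProduct.tmul_add, mul_add, map_add]
      rw [inner (Coalgebra.comul (R := k) y), mulS_l, rap_tmul]
      rw [TensorProduct.tmul_smul, mul_smul_comm, map_smul]
      rw [← TensorProduct.smul_tmul', mul_smul_comm, map_smul]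
    | add u v hu hv => simp_all [map_add, TensorProduct.add_tmul, mul_add]
  -- assemble
  rw [stepA (Coalgebra.comul (R := k) c), ← hD]
  have e1 : lap lam (D * (a ⊗ₜ[k] (1 : H)))
      = Θ' ((LinearMap.lTensor H (Coalgebra.comul (R := k) (A := H)))
          (Coalgebra.comul (R := k) a)) := by
    rw [c2 (Coalgebra.comul (R := k) a), rap_counit]
  rw [e1]
  have e2 : Θ' ((LinearMap.lTensor H (Coalgebra.comul (R := k) (A := H)))
      (Coalgebra.comul (R := k) a))
      = Θ ((LinearMap.rTensor H (Coalgebra.comul (R := k) (A := H)))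
          (Coalgebra.comul (R := k) a)) := by
    show Θ ((TensorProduct.assoc k H H H).symm _) = _
    rw [Coalgebra.coassoc_symm_apply]
  rw [e2, c1]

/-- Mirror identity for a left integral `lam'` in the dual:
`∑ lam' (a * c₂) • c₁ = ∑ lam' (a₂ * c) • S a₁`. -/
theorem star_id' (lam' : H →ₗ[k] k)
    (hli : ∀ a : H, rap lam' (Coalgebra.comul (R := k) a) = lam' a • (1 : H)) (a c : H) :
    rap (lam' ∘ₗ LinearMap.mulLeft k a) (Coalgebra.comul (R := k) c)
      = rap (lam' ∘ₗ LinearMap.mulRight k c)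
          ((LinearMap.rTensor H (HopfAlgebra.antipode k : H →ₗ[k] H))
            (Coalgebra.comul (R := k) a)) := by
  set S : H →ₗ[k] H := (HopfAlgebra.antipode k : H →ₗ[k] H) with hS
  set D : H ⊗[k] H := Coalgebra.comul (R := k) c with hD
  set A1 : H ⊗[k] H →ₗ[k] H := rap lam' ∘ₗ LinearMap.mulRight k D with hA1
  set Θ' : H ⊗[k] (H ⊗[k] H) →ₗ[k] H := LinearMap.mul' k H ∘ₗ TensorProduct.map S A1 with hΘ'
  set Θ : (H ⊗[k] H) ⊗[k] H →ₗ[k] H :=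
    Θ' ∘ₗ (TensorProduct.assoc k H H H).toLinearMap with hΘ
  have hA1app : ∀ w : H ⊗[k] H, A1 w = rap lam' (w * D) := fun w => rfl
  have hΘ'app : ∀ (x : H) (u : H ⊗[k] H), Θ' (x ⊗ₜ[k] u) = S x * A1 u := by
    intro x u; simp [hΘ']
  have hΘapp : ∀ (v : H ⊗[k] H) (z : H),
      Θ (v ⊗ₜ[k] z) = Θ' ((TensorProduct.assoc k H H H) (v ⊗ₜ[k] z)) := fun v z => rfl
  have stepA : ∀ w : H ⊗[k] H,
      rap (lam' ∘ₗ LinearMap.mulLeft k a) w = rap lam' (((1 : H) ⊗ₜ[k] a) * w) := by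
    intro w
    induction w using TensorProduct.induction_on with
    | zero => simp
    | tmul x y => simp [Algebra.TensorProduct.tmul_mul_tmul]
    | add u v hu hv => simp_all [map_add, mul_add]
  have c2a : ∀ (s y z : H),
      s * rap lam' ((y ⊗ₜ[k] z) * D) = rap lam' (((s * y) ⊗ₜ[k] z) * D) := by
    intro s y z
    have : ∀ w : H ⊗[k] H,
        s * rap lam' ((y ⊗ₜ[k] z) * w) = rap lam' (((s * y) ⊗ₜ[k] z) * w) := by
      intro w
      induction w using TensorProduct.induction_on with
      | zero => simp
      | tmul p q =>
        simp [Algebra.TensorProduct.tmul_mul_tmul, mul_smul_comm, mul_assoc]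
      | add u v hu hv => simp_all [map_add, mul_add]
    exact this D
  have c1 : ∀ u : H ⊗[k] H,
      Θ' ((LinearMap.lTensor H (Coalgebra.comul (R := k) (A := H))) u)
        = rap (lam' ∘ₗ LinearMap.mulRight k c) ((LinearMap.rTensor H S) u) := by
    intro u
    induction u using TensorProduct.induction_on with
    | zero => simp
    | tmul x y =>
      rw [LinearMap.lTensor_tmul, hΘ'app, hA1app]
      have hcm : Coalgebra.comul (R := k) y * D = Coalgebra.comul (R := k) (y * c) := by
        rw [hD, ← Bialgebra.comul_mul]
      rw [hcm, hli, LinearMap.rTensor_tmul]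
      simp [mul_smul_comm]
    | add u v hu hv => simp_all [map_add]
  have c2 : ∀ u : H ⊗[k] H,
      Θ ((LinearMap.rTensor H (Coalgebra.comul (R := k) (A := H))) u)
        = rap lam' (((1 : H) ⊗ₜ[k] (lap (Coalgebra.counit (R := k)) u)) * D) := by
    intro u
    induction u using TensorProduct.induction_on with
    | zero => simp
    | tmul x z =>
      rw [LinearMap.rTensor_tmul]
      have inner : ∀ v : H ⊗[k] H,
          Θ (v ⊗ₜ[k] z)
            = rap lam' (((LinearMap.mul' k H ((LinearMap.rTensor H S) v)) ⊗ₜ[k] z) * D) := by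
        intro v
        induction v using TensorProduct.induction_on with
        | zero => simp
        | tmul r s =>
          rw [hΘapp, TensorProduct.assoc_tmul, hΘ'app, hA1app, c2a,
            LinearMap.rTensor_tmul, LinearMap.mul'_apply]
        | add v₁ v₂ h₁ h₂ =>
          rw [TensorProduct.add_tmul, map_add, h₁, h₂, map_add, map_add,
            TensorProduct.add_tmul, add_mul, map_add]
      rw [inner (Coalgebra.comul (R := k) x), mulS_r, lap_tmul]
      rw [← TensorProduct.smul_tmul', smul_mul_assoc, map_smul, TensorProduct.tmul_smul,
        smul_mul_assoc, map_smul]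
    | add u v hu hv => simp_all [map_add, TensorProduct.tmul_add, add_mul]
  rw [stepA (Coalgebra.comul (R := k) c), ← hD]
  have e1 : rap lam' (((1 : H) ⊗ₜ[k] a) * D)
      = Θ ((LinearMap.rTensor H (Coalgebra.comul (R := k) (A := H)))
          (Coalgebra.comul (R := k) a)) := by
    rw [c2 (Coalgebra.comul (R := k) a), lap_counit]
  rw [e1]
  have e2 : Θ ((LinearMap.rTensor H (Coalgebra.comul (R := k) (A := H)))
      (Coalgebra.comul (R := k) a))
      = Θ' ((LinearMap.lTensor H (Coalgebra.comul (R := k) (A := H)))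
          (Coalgebra.comul (R := k) a)) := by
    show Θ' ((TensorProduct.assoc k H H H) _) = _
    rw [Coalgebra.coassoc_apply]
  rw [e2, c1]




lemma exists_dualBasis (k H : Type*) [CommRing k] [AddCommGroup H] [Module k H]
    (hfin : Module.Finite k H) (hproj : Module.Projective k H) :
    ∃ (m : ℕ) (e : Fin m → H) (eh : Fin m → (H →ₗ[k] k)),
      ∀ a : H, ∑ j, eh j a • e j = a := by
  classical
  haveI := hfin; haveI := hproj
  obtain ⟨m, π, hπ⟩ := Module.Finite.exists_fin' k H
  obtain ⟨σ, hσ⟩ := Module.projective_lifting_property π LinearMap.id hπ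
  refine ⟨m, fun j => π (Pi.single j 1), fun j => (LinearMap.proj j) ∘ₗ σ, fun a => ?_⟩
  have h1 : ∀ j : Fin m, (σ a j) • π (Pi.single j (1 : k)) = π (Pi.single j (σ a j)) := by
    intro j
    rw [← map_smul, ← Pi.single_smul, smul_eq_mul, mul_one]
  calc ∑ j, ((LinearMap.proj j ∘ₗ σ) a) • π (Pi.single j (1 : k))
      = ∑ j, π (Pi.single j (σ a j)) := Finset.sum_congr rfl fun j _ => h1 j
    _ = π (∑ j, Pi.single j (σ a j)) := by rw [map_sum]
    _ = π (σ a) := by rw [Finset.univ_sum_single]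
    _ = a := by rw [← LinearMap.comp_apply, hσ]; rfl

lemma conv_eval1 (f g : H →ₗ[k] k) (a : H) :
    conv k H f g a = g (lap f (Coalgebra.comul (R := k) a)) :=
  mul'_map_lap f g _

lemma conv_eval2 (f g : H →ₗ[k] k) (a : H) :
    conv k H f g a = f (rap g (Coalgebra.comul (R := k) a)) :=
  mul'_map_rap f g _

set_option maxHeartbeats 1600000 in
/-- Forward direction: an FH-structure on `H` yields one on the dual. -/
lemma forward (hfin : Module.Finite k H) (hproj : Module.Projective k H)
    (lam : H →ₗ[k] k) (n : ℕ) (x y : Fin n → H)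
    (hsys : IsFrobeniusSystem k H lam x y)
    (hint : ∀ a : H, lap lam (Coalgebra.comul (R := k) a) = lam a • (1 : H)) :
    (Module.Finite k (H →ₗ[k] k) ∧ Module.Projective k (H →ₗ[k] k) ∧
      ∃ (t : H) (m : ℕ) (F G : Fin m → (H →ₗ[k] k)),
        (∀ g : H →ₗ[k] k,
          (∑ i, (conv k H (G i) g) t • F i = g) ∧ (∑ i, (conv k H g (F i)) t • G i = g)) ∧
        (∀ a : H, t * a = Coalgebra.counit (R := k) a • t)) := by
  classical
  haveI := hfin; haveI := hproj
  obtain ⟨m, e, eh, hdb⟩ := exists_dualBasis k H hfin hproj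
  have hdb' : ∀ (g : H →ₗ[k] k) (b : H), ∑ j, g (e j) * eh j b = g b := by
    intro g b
    have h := congrArg g (hdb b)
    rw [map_sum] at h
    simp only [map_smul, smul_eq_mul] at h
    rw [← h]
    exact Finset.sum_congr rfl fun j _ => mul_comm _ _
  -- finiteness and projectivity of the dual
  set Q : (Fin m → k) →ₗ[k] (H →ₗ[k] k) :=
    ∑ j, (LinearMap.proj j : (Fin m → k) →ₗ[k] k).smulRight (eh j) with hQdef
  have hQ : ∀ (v : Fin m → k) (b : H), Q v b = ∑ j, v j * eh j b := by
    intro v b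
    rw [hQdef]
    simp [LinearMap.sum_apply, smul_eq_mul]
  have hQsurj : Function.Surjective Q := by
    intro g
    refine ⟨fun j => g (e j), ?_⟩
    ext b
    rw [hQ]
    exact hdb' g b
  have finD : Module.Finite k (H →ₗ[k] k) := Module.Finite.of_surjective Q hQsurj
  set I : (H →ₗ[k] k) →ₗ[k] (Fin m → k) :=
    LinearMap.pi (fun j => LinearMap.applyₗ (e j)) with hIdef
  have hQI : Q ∘ₗ I = LinearMap.id := by
    refine LinearMap.ext fun g => LinearMap.ext fun b => ?_
    rw [LinearMap.comp_apply, LinearMap.id_apply, hQ]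
    have hI : ∀ j, I g j = g (e j) := fun j => rfl
    simp only [hI]
    exact hdb' g b
  have projD : Module.Projective k (H →ₗ[k] k) := Module.Projective.of_split I Q hQI
  -- the elements t and u
  set S : H →ₗ[k] H := (HopfAlgebra.antipode k : H →ₗ[k] H) with hSdef
  set t : H := ∑ i, Coalgebra.counit (R := k) (x i) • y i with htdef
  have ht : ∀ b : H, lam (t * b) = Coalgebra.counit (R := k) b := by
    intro b
    have h1 : t * b = ∑ i, Coalgebra.counit (R := k) (x i) • (y i * b) := by
      rw [htdef, Finset.sum_mul]
      exact Finset.sum_congr rfl fun i _ => smul_mul_assoc _ _ _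
    rw [h1, map_sum]
    have h2 := congrArg (Coalgebra.counit (R := k)) (hsys b).1
    rw [map_sum] at h2
    simp only [map_smul, smul_eq_mul] at h2 ⊢
    rw [← h2]
    exact Finset.sum_congr rfl fun i _ => mul_comm _ _
  set u : H := ∑ i, Coalgebra.counit (R := k) (y i) • x i with hudef
  have hu : ∀ b : H, lam (b * u) = Coalgebra.counit (R := k) b := by
    intro b
    have h1 : b * u = ∑ i, Coalgebra.counit (R := k) (y i) • (b * x i) := by
      rw [hudef, Finset.mul_sum]
      exact Finset.sum_congr rfl fun i _ => mul_smul_comm _ _ _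
    rw [h1, map_sum]
    have h2 := congrArg (Coalgebra.counit (R := k)) (hsys b).2
    rw [map_sum] at h2
    simp only [map_smul, smul_eq_mul] at h2 ⊢
    rw [← h2]
    exact Finset.sum_congr rfl fun i _ => mul_comm _ _
  clear_value t u
  -- injectivity of w ↦ lam (w * ·)
  have hinj' : ∀ w w' : H, (∀ b, lam (w * b) = lam (w' * b)) → w = w' := by
    intro w w' h
    rw [← (hsys w).2, ← (hsys w').2]
    exact Finset.sum_congr rfl fun i _ => by rw [h (x i)]
  -- t is a right integral of H
  have hti : ∀ a : H, t * a = Coalgebra.counit (R := k) a • t := by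
    intro a
    apply hinj'
    intro b
    rw [mul_assoc, ht (a * b), smul_mul_assoc, map_smul, ht b, smul_eq_mul,
      Bialgebra.counit_mul]
  -- the antipode is bijective
  have hSsurj : Function.Surjective S := by
    intro cc
    have hst := star_id lam hint u cc
    have hfe : lam ∘ₗ LinearMap.mulRight k u = Coalgebra.counit (R := k) := by
      ext b; simpa using hu b
    rw [hfe, lap_counit] at hst
    exact ⟨lap (lam ∘ₗ LinearMap.mulLeft k cc) (Coalgebra.comul (R := k) u),
      by rw [← lap_lTensor, ← hst]⟩
  have hSinj : Function.Injective S :=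
    OrzechProperty.injective_of_surjective_endomorphism S hSsurj
  set E := LinearEquiv.ofBijective S ⟨hSinj, hSsurj⟩ with hEdef
  -- the key identity Ψ_t ∘ θ = S
  have hII : ∀ a : H, lap (lam ∘ₗ LinearMap.mulRight k a) (Coalgebra.comul (R := k) t)
      = S a := by
    intro a
    have hst := star_id lam hint a t
    have hfe : lam ∘ₗ LinearMap.mulLeft k t = Coalgebra.counit (R := k) := by
      ext b; simpa using ht b
    rw [hfe, lap_lTensor, lap_counit] at hst
    exact hst
  -- θ is bijective with explicit inverse
  have hτ : ∀ g : H →ₗ[k] k, lam ∘ₗ LinearMap.mulRight k (∑ i, g (y i) • x i) = g := by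
    intro g
    ext b
    simp only [LinearMap.comp_apply, LinearMap.mulRight_apply]
    rw [Finset.mul_sum]
    have h3 : ∀ i, b * (g (y i) • x i) = g (y i) • (b * x i) := fun i => mul_smul_comm _ _ _
    rw [Finset.sum_congr rfl fun i _ => h3 i, map_sum]
    simp only [map_smul, smul_eq_mul]
    have h2 := congrArg g (hsys b).2
    rw [map_sum] at h2
    simp only [map_smul, smul_eq_mul] at h2
    rw [← h2]
    exact Finset.sum_congr rfl fun i _ => mul_comm _ _
  have hΨinj : ∀ g g' : H →ₗ[k] k,
      lap g (Coalgebra.comul (R := k) t) = lap g' (Coalgebra.comul (R := k) t) → g = g' := by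
    intro g g' hgg
    have a1 : S (∑ i, g (y i) • x i) = lap g (Coalgebra.comul (R := k) t) := by
      rw [← hII (∑ i, g (y i) • x i), hτ g]
    have a2 : S (∑ i, g' (y i) • x i) = lap g' (Coalgebra.comul (R := k) t) := by
      rw [← hII (∑ i, g' (y i) • x i), hτ g']
    have h1 : S (∑ i, g (y i) • x i) = S (∑ i, g' (y i) • x i) := by rw [a1, a2, hgg]
    have h2 := hSinj h1
    rw [← hτ g, ← hτ g', h2]
  set F : Fin m → (H →ₗ[k] k) := eh with hF
  set G : Fin m → (H →ₗ[k] k) :=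
    fun j => lam ∘ₗ LinearMap.mulRight k (E.symm (e j)) with hG
  have hΨG : ∀ j, lap (G j) (Coalgebra.comul (R := k) t) = e j := by
    intro j
    have h1 : G j = lam ∘ₗ LinearMap.mulRight k (E.symm (e j)) := rfl
    rw [h1, hII (E.symm (e j))]
    exact E.apply_symm_apply (e j)
  have R1 : ∀ g : H →ₗ[k] k, ∑ j, (conv k H (G j) g) t • F j = g := by
    intro g
    ext b
    rw [LinearMap.sum_apply]
    have h1 : ∀ j, ((conv k H (G j) g) t • F j) b = g (e j) * eh j b := by
      intro j
      rw [LinearMap.smul_apply, conv_eval1, hΨG, smul_eq_mul]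
    rw [Finset.sum_congr rfl fun j _ => h1 j]
    exact hdb' g b
  have R2 : ∀ g : H →ₗ[k] k, ∑ j, (conv k H g (F j)) t • G j = g := by
    intro g
    apply hΨinj
    rw [lap_sumf (fun j => (conv k H g (F j)) t) G (Coalgebra.comul (R := k) t)]
    have h1 : ∀ j, (conv k H g (F j)) t • lap (G j) (Coalgebra.comul (R := k) t)
        = eh j (lap g (Coalgebra.comul (R := k) t)) • e j := by
      intro j
      rw [conv_eval1, hΨG]
    rw [Finset.sum_congr rfl fun j _ => h1 j, hdb (lap g (Coalgebra.comul (R := k) t))]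
  exact ⟨finD, projD, t, m, F, G, fun g => ⟨R1 g, R2 g⟩, hti⟩

set_option maxHeartbeats 1600000 in
/-- Reverse direction: an FH-structure on the dual yields one on `H`. -/
lemma reverse (hfin : Module.Finite k H) (hproj : Module.Projective k H)
    (t : H) (n : ℕ) (F G : Fin n → (H →ₗ[k] k))
    (hsys : ∀ g : H →ₗ[k] k,
      (∑ i, (conv k H (G i) g) t • F i = g) ∧ (∑ i, (conv k H g (F i)) t • G i = g))
    (hti : ∀ a : H, t * a = Coalgebra.counit (R := k) a • t) :
    ∃ (lam : H →ₗ[k] k) (m : ℕ) (xx yy : Fin m → H),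
      IsFrobeniusSystem k H lam xx yy ∧
      ∀ a : H, lap lam (Coalgebra.comul (R := k) a) = lam a • (1 : H) := by
  classical
  haveI := hfin; haveI := hproj
  set S : H →ₗ[k] H := (HopfAlgebra.antipode k : H →ₗ[k] H) with hSdef
  obtain ⟨m, e, eh, hdb⟩ := exists_dualBasis k H hfin hproj
  have hsep : ∀ b b' : H, (∀ g : H →ₗ[k] k, g b = g b') → b = b' := by
    intro b b' h
    rw [← hdb b, ← hdb b']
    exact Finset.sum_congr rfl fun j _ => by rw [h (eh j)]
  have R1 : ∀ g : H →ₗ[k] k, ∑ i, g (lap (G i) (Coalgebra.comul (R := k) t)) • F i = g := by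
    intro g
    have h := (hsys g).1
    calc ∑ i, g (lap (G i) (Coalgebra.comul (R := k) t)) • F i
        = ∑ i, (conv k H (G i) g) t • F i :=
          Finset.sum_congr rfl fun i _ => by rw [conv_eval1]
      _ = g := h
  have R1' : ∀ g : H →ₗ[k] k, ∑ i, (G i) (rap g (Coalgebra.comul (R := k) t)) • F i = g := by
    intro g
    have h := (hsys g).1
    calc ∑ i, (G i) (rap g (Coalgebra.comul (R := k) t)) • F i
        = ∑ i, (conv k H (G i) g) t • F i :=
          Finset.sum_congr rfl fun i _ => by rw [conv_eval2]
      _ = g := h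
  have R2 : ∀ g : H →ₗ[k] k, ∑ i, (F i) (lap g (Coalgebra.comul (R := k) t)) • G i = g := by
    intro g
    have h := (hsys g).2
    calc ∑ i, (F i) (lap g (Coalgebra.comul (R := k) t)) • G i
        = ∑ i, (conv k H g (F i)) t • G i :=
          Finset.sum_congr rfl fun i _ => by rw [conv_eval1]
      _ = g := h
  have R2' : ∀ g : H →ₗ[k] k, ∑ i, g (rap (F i) (Coalgebra.comul (R := k) t)) • G i = g := by
    intro g
    have h := (hsys g).2
    calc ∑ i, g (rap (F i) (Coalgebra.comul (R := k) t)) • G i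
        = ∑ i, (conv k H g (F i)) t • G i :=
          Finset.sum_congr rfl fun i _ => by rw [conv_eval2]
      _ = g := h
  have A' : ∀ a : H, ∑ i, F i a • lap (G i) (Coalgebra.comul (R := k) t) = a := by
    intro a
    apply hsep
    intro g
    rw [map_sum]
    simp only [map_smul, smul_eq_mul]
    have h1 := congrArg (fun (φ : H →ₗ[k] k) => φ a) (R1 g)
    simp only [LinearMap.sum_apply, LinearMap.smul_apply, smul_eq_mul] at h1
    rw [← h1]
    exact Finset.sum_congr rfl fun i _ => mul_comm _ _
  have B' : ∀ a : H, ∑ i, G i a • rap (F i) (Coalgebra.comul (R := k) t) = a := by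
    intro a
    apply hsep
    intro g
    rw [map_sum]
    simp only [map_smul, smul_eq_mul]
    have h1 := congrArg (fun (φ : H →ₗ[k] k) => φ a) (R2' g)
    simp only [LinearMap.sum_apply, LinearMap.smul_apply, smul_eq_mul] at h1
    rw [← h1]
    exact Finset.sum_congr rfl fun i _ => mul_comm _ _
  have hΨsurj : ∀ a : H, lap (∑ i, F i a • G i) (Coalgebra.comul (R := k) t) = a := by
    intro a
    rw [lap_sumf]
    exact A' a
  have hΨinj : ∀ g g' : H →ₗ[k] k,
      lap g (Coalgebra.comul (R := k) t) = lap g' (Coalgebra.comul (R := k) t) → g = g' := by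
    intro g g' h
    rw [← R2 g, ← R2 g', h]
  have hΨ'surj : ∀ a : H, rap (∑ i, G i a • F i) (Coalgebra.comul (R := k) t) = a := by
    intro a
    rw [rap_sumf]
    exact B' a
  have hΨ'inj : ∀ g g' : H →ₗ[k] k,
      rap g (Coalgebra.comul (R := k) t) = rap g' (Coalgebra.comul (R := k) t) → g = g' := by
    intro g g' h
    rw [← R1' g, ← R1' g', h]
  set lam : H →ₗ[k] k := ∑ i, F i 1 • G i with hlamdef
  have hlam : lap lam (Coalgebra.comul (R := k) t) = 1 := hΨsurj 1
  clear_value lam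
  have hlamt : lam t = 1 := by
    have h1 : Coalgebra.counit (R := k) (lap lam (Coalgebra.comul (R := k) t)) = (1 : k) := by
      rw [hlam, Bialgebra.counit_one]
    rw [eps_lap, rap_counit] at h1
    exact h1
  have hlt : ∀ a : H, lam (t * a) = Coalgebra.counit (R := k) a := by
    intro a
    rw [hti a, map_smul, hlamt, smul_eq_mul, mul_one]
  -- lam is a right integral in the dual
  have hconv : ∀ g : H →ₗ[k] k, conv k H lam g = g 1 • lam := by
    intro g
    apply hΨinj
    have claim1 : ∀ w : H ⊗[k] H, lap (conv k H lam g) w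
        = lap g ((LinearMap.rTensor H (lap lam))
            ((LinearMap.rTensor H (Coalgebra.comul (R := k) (A := H))) w)) := by
      intro w
      induction w using TensorProduct.induction_on with
      | zero => simp only [map_zero]
      | tmul p q =>
        rw [LinearMap.rTensor_tmul, LinearMap.rTensor_tmul, lap_tmul, lap_tmul, conv_eval1]
      | add w₁ w₂ h₁ h₂ => simp only [map_add, h₁, h₂]
    have claim2a : ∀ (p : H) (v : H ⊗[k] H),
        (LinearMap.rTensor H (lap lam)) ((TensorProduct.assoc k H H H).symm (p ⊗ₜ[k] v))
          = lam p • v := by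
      intro p v
      induction v using TensorProduct.induction_on with
      | zero => rw [TensorProduct.tmul_zero, map_zero, map_zero, smul_zero]
      | tmul r s =>
        rw [TensorProduct.assoc_symm_tmul, LinearMap.rTensor_tmul, lap_tmul,
          TensorProduct.smul_tmul']
      | add v₁ v₂ h₁ h₂ =>
        rw [TensorProduct.tmul_add, map_add, map_add, h₁, h₂, smul_add]
    have claim2 : ∀ w : H ⊗[k] H,
        (LinearMap.rTensor H (lap lam)) ((TensorProduct.assoc k H H H).symm
          ((LinearMap.lTensor H (Coalgebra.comul (R := k) (A := H))) w))
          = Coalgebra.comul (R := k) (lap lam w) := by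
      intro w
      induction w using TensorProduct.induction_on with
      | zero => simp only [map_zero]
      | tmul p q =>
        rw [LinearMap.lTensor_tmul, claim2a, lap_tmul, map_smul]
      | add w₁ w₂ h₁ h₂ => simp only [map_add, h₁, h₂]
    have hco : (LinearMap.rTensor H (Coalgebra.comul (R := k) (A := H)))
        (Coalgebra.comul (R := k) t)
        = (TensorProduct.assoc k H H H).symm
            ((LinearMap.lTensor H (Coalgebra.comul (R := k) (A := H)))
              (Coalgebra.comul (R := k) t)) :=
      (Coalgebra.coassoc_symm_apply t).symm
    rw [claim1 (Coalgebra.comul (R := k) t), hco, claim2, hlam, Bialgebra.comul_one,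
      Algebra.TensorProduct.one_def, lap_tmul, lap_smulf, hlam]
  have hint : ∀ a : H, lap lam (Coalgebra.comul (R := k) a) = lam a • (1 : H) := by
    intro a
    apply hsep
    intro g
    have h1 : g (lap lam (Coalgebra.comul (R := k) a)) = conv k H lam g a :=
      (conv_eval1 lam g a).symm
    rw [h1, hconv g, LinearMap.smul_apply, map_smul, smul_eq_mul, smul_eq_mul]
    exact mul_comm _ _
  -- identities II and III
  have hII : ∀ a : H, lap (lam ∘ₗ LinearMap.mulRight k a) (Coalgebra.comul (R := k) t)
      = S a := by
    intro a
    have hst := star_id lam hint a t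
    have hfe : lam ∘ₗ LinearMap.mulLeft k t = Coalgebra.counit (R := k) := by
      ext b; simpa using hlt b
    rw [hfe, lap_lTensor, lap_counit] at hst
    exact hst
  have lapmul : ∀ (g : H →ₗ[k] k) (aa : H) (w : H ⊗[k] H),
      g (lap (lam ∘ₗ LinearMap.mulRight k aa) w) = lam ((rap g w) * aa) := by
    intro g aa w
    induction w using TensorProduct.induction_on with
    | zero => simp only [map_zero, zero_mul]
    | tmul p q =>
      rw [lap_tmul, rap_tmul, map_smul, smul_mul_assoc, map_smul]
      simp only [LinearMap.comp_apply, LinearMap.mulRight_apply, smul_eq_mul]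
      exact mul_comm _ _
    | add w₁ w₂ h₁ h₂ => simp only [map_add, add_mul, h₁, h₂]
  have hIII : ∀ (g : H →ₗ[k] k) (aa : H),
      lam ((rap g (Coalgebra.comul (R := k) t)) * aa) = g (S aa) := by
    intro g aa
    have h := lapmul g aa (Coalgebra.comul (R := k) t)
    rw [hII] at h
    exact h.symm
  -- lam' is a left integral in the dual
  set lam' : H →ₗ[k] k := ∑ i, G i 1 • F i with hlam'def
  have hlam' : rap lam' (Coalgebra.comul (R := k) t) = 1 := hΨ'surj 1
  clear_value lam'
  have hlam't : lam' t = 1 := by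
    have h1 : Coalgebra.counit (R := k) (rap lam' (Coalgebra.comul (R := k) t)) = (1 : k) := by
      rw [hlam', Bialgebra.counit_one]
    rw [eps_rap, lap_counit] at h1
    exact h1
  have hconv' : ∀ g : H →ₗ[k] k, conv k H g lam' = g 1 • lam' := by
    intro g
    apply hΨ'inj
    have claim1 : ∀ w : H ⊗[k] H, rap (conv k H g lam') w
        = rap g ((LinearMap.lTensor H (rap lam'))
            ((LinearMap.lTensor H (Coalgebra.comul (R := k) (A := H))) w)) := by
      intro w
      induction w using TensorProduct.induction_on with
      | zero => simp only [map_zero]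
      | tmul p q =>
        rw [LinearMap.lTensor_tmul, LinearMap.lTensor_tmul, rap_tmul, rap_tmul, conv_eval2]
      | add w₁ w₂ h₁ h₂ => simp only [map_add, h₁, h₂]
    have claim2a : ∀ (q : H) (v : H ⊗[k] H),
        (LinearMap.lTensor H (rap lam')) ((TensorProduct.assoc k H H H) (v ⊗ₜ[k] q))
          = lam' q • v := by
      intro q v
      induction v using TensorProduct.induction_on with
      | zero => rw [TensorProduct.zero_tmul, map_zero, map_zero, smul_zero]
      | tmul r s =>
        rw [TensorProduct.assoc_tmul, LinearMap.lTensor_tmul, rap_tmul,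
          TensorProduct.tmul_smul]
      | add v₁ v₂ h₁ h₂ =>
        rw [TensorProduct.add_tmul, map_add, map_add, h₁, h₂, smul_add]
    have claim2 : ∀ w : H ⊗[k] H,
        (LinearMap.lTensor H (rap lam')) ((TensorProduct.assoc k H H H)
          ((LinearMap.rTensor H (Coalgebra.comul (R := k) (A := H))) w))
          = Coalgebra.comul (R := k) (rap lam' w) := by
      intro w
      induction w using TensorProduct.induction_on with
      | zero => simp only [map_zero]
      | tmul p q =>
        rw [LinearMap.rTensor_tmul, claim2a, rap_tmul, map_smul]
      | add w₁ w₂ h₁ h₂ => simp only [map_add, h₁, h₂]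
    have hco : (LinearMap.lTensor H (Coalgebra.comul (R := k) (A := H)))
        (Coalgebra.comul (R := k) t)
        = (TensorProduct.assoc k H H H)
            ((LinearMap.rTensor H (Coalgebra.comul (R := k) (A := H)))
              (Coalgebra.comul (R := k) t)) :=
      (Coalgebra.coassoc_apply t).symm
    rw [claim1 (Coalgebra.comul (R := k) t), hco, claim2, hlam', Bialgebra.comul_one,
      Algebra.TensorProduct.one_def, rap_tmul, rap_smulf, hlam']
  have hli : ∀ a : H, rap lam' (Coalgebra.comul (R := k) a) = lam' a • (1 : H) := by
    intro a
    apply hsep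
    intro g
    have h1 : g (rap lam' (Coalgebra.comul (R := k) a)) = conv k H g lam' a :=
      (conv_eval2 g lam' a).symm
    rw [h1, hconv' g, LinearMap.smul_apply, map_smul, smul_eq_mul, smul_eq_mul]
    exact mul_comm _ _
  -- the antipode is bijective
  have hlt' : lam' ∘ₗ LinearMap.mulLeft k t = Coalgebra.counit (R := k) := by
    ext b
    simp only [LinearMap.comp_apply, LinearMap.mulLeft_apply]
    rw [hti b, map_smul, hlam't, smul_eq_mul, mul_one]
  have hSsurj : Function.Surjective S := by
    intro cc
    have hst := star_id' lam' hli t cc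
    rw [hlt', rap_counit] at hst
    exact ⟨rap (lam' ∘ₗ LinearMap.mulRight k cc) (Coalgebra.comul (R := k) t),
      by rw [← rap_rTensor, ← hst]⟩
  have hSinj : Function.Injective S :=
    OrzechProperty.injective_of_surjective_endomorphism S hSsurj
  set E := LinearEquiv.ofBijective S ⟨hSinj, hSsurj⟩ with hEdef
  -- injectivity of w ↦ lam (w * ·)
  have hθ'inj0 : ∀ w : H, (∀ b, lam (w * b) = 0) → w = 0 := by
    intro w hw
    set gw : H →ₗ[k] k := ∑ i, G i w • F i with hgwdef
    have hgw : rap gw (Coalgebra.comul (R := k) t) = w := hΨ'surj w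
    clear_value gw
    have h1 : ∀ b, gw (S b) = 0 := by
      intro b
      rw [← hIII gw b, hgw]
      exact hw b
    have h2 : gw = 0 := by
      ext cc
      obtain ⟨b, hb⟩ := hSsurj cc
      rw [← hb, h1 b, LinearMap.zero_apply]
    rw [← hgw, h2, rap_zerof]
  have hθ'inj : ∀ w w' : H, (∀ b, lam (w * b) = lam (w' * b)) → w = w' := by
    intro w w' h
    have h0 := hθ'inj0 (w - w') (fun b => by rw [sub_mul, map_sub, h b, sub_self])
    exact sub_eq_zero.mp h0
  -- the Frobenius system for H
  set yy : Fin m → H :=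
    fun j => rap ((eh j) ∘ₗ (E.symm : H ≃ₗ[k] H).toLinearMap)
      (Coalgebra.comul (R := k) t) with hyydef
  have hyj : ∀ j b, lam (yy j * b) = eh j b := by
    intro j b
    have h0 : yy j = rap ((eh j) ∘ₗ (E.symm : H ≃ₗ[k] H).toLinearMap)
        (Coalgebra.comul (R := k) t) := rfl
    rw [h0, hIII ((eh j) ∘ₗ (E.symm : H ≃ₗ[k] H).toLinearMap) b]
    show eh j (E.symm (S b)) = eh j b
    have hb : E.symm (S b) = b := by
      have hSb : S b = E b := rfl
      rw [hSb, E.symm_apply_apply]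
    rw [hb]
  refine ⟨lam, m, e, yy, fun a => ⟨?_, ?_⟩, hint⟩
  · calc ∑ j, lam (yy j * a) • e j = ∑ j, eh j a • e j :=
        Finset.sum_congr rfl fun j _ => by rw [hyj j a]
      _ = a := hdb a
  · apply hθ'inj
    intro b
    rw [Finset.sum_mul, map_sum]
    have h1 : ∀ j, lam ((lam (a * e j) • yy j) * b) = lam (a * e j) * eh j b := by
      intro j
      rw [smul_mul_assoc, map_smul, hyj j b, smul_eq_mul]
    rw [Finset.sum_congr rfl fun j _ => h1 j]
    have h2 : a * b = a * ∑ j, eh j b • e j := by rw [hdb b]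
    rw [h2, Finset.mul_sum, map_sum]
    have h3 : ∀ j, lam (a * (eh j b • e j)) = lam (a * e j) * eh j b := by
      intro j
      rw [mul_smul_comm, map_smul, smul_eq_mul, mul_comm]
    rw [Finset.sum_congr rfl fun j _ => h3 j]


end FHproof

/-- A finitely generated projective Hopf algebra `H` over a commutative ring `k` is an
FH-algebra (i.e. admits a Frobenius homomorphism `f` which is a right integral in `H*`)
if and only if its dual Hopf algebra `H*` (with the convolution product, unit `ε`, and
counit/right-integral structure dualized via the canonical identification `H ≅ H**`) is an
FH-algebra; the latter amounts to: `H*` is finitely generated projective over `k` and there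
is `t ∈ H` which is a right integral of `H` (the FH-homomorphism of `H*` being evaluation
at `t`) such that evaluation at `t` is a Frobenius homomorphism for the convolution
algebra `H*`. -/
theorem stmt_5 (k : Type*) [CommRing k] (H : Type*) [Ring H] [HopfAlgebra k H]
    (hfin : Module.Finite k H) (hproj : Module.Projective k H) :
    (∃ (f : H →ₗ[k] k) (n : ℕ) (x y : Fin n → H),
        IsFrobeniusSystem k H f x y ∧
        ∀ a : H,
          (TensorProduct.lid k H) ((TensorProduct.map f LinearMap.id) (Coalgebra.comul (R := k) a))
            = f a • (1 : H)) ↔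
    (Module.Finite k (H →ₗ[k] k) ∧ Module.Projective k (H →ₗ[k] k) ∧
      ∃ (t : H) (n : ℕ) (F G : Fin n → (H →ₗ[k] k)),
        (∀ g : H →ₗ[k] k,
          (∑ i, (conv k H (G i) g) t • F i = g) ∧ (∑ i, (conv k H g (F i)) t • G i = g)) ∧
        (∀ a : H, t * a = Coalgebra.counit (R := k) a • t)) := by
  constructor
  · rintro ⟨f, n, x, y, hsys, hint⟩
    exact FHproof.forward hfin hproj f n x y hsys (fun a => hint a)
  · rintro ⟨-, -, t, n, F, G, hsys, hti⟩
    obtain ⟨lam, m, xx, yy, hsys', hint⟩ := FHproof.reverse hfin hproj t n F G hsys hti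
    exact ⟨lam, m, xx, yy, hsys', fun a => hint a⟩
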